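/- Let (G,H) be a finite Gelfand pair, ω a zonal spherical function of (G,H), and K a subgroup of G with H ⊆ K ⊆ G such that (K,H) is also a Gelfand pair. Then the restriction ω|_K is a zonal spherical function of (K,H). Moreover, every zonal spherical function of (K,H) arises as such a restriction. -/

import Mathlib

open scoped Classical

/-- Convolution over a subgroup `K` of functions on `G`:
`(f₁ * f₂)(x) = Σ_{t ∈ K} f₁(t) f₂(t⁻¹ x)`. -/
noncomputable def convOn {G : Type*} [Group G] [Fintype G] (K : Subgroup G)
    (f₁ f₂ : G → ℂ) (x : G) : ℂ :=
  ∑ t : K, f₁ t * f₂ ((t : G)⁻¹ * x)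

/-- A function is bi-`H`-invariant on the subgroup `K` (with `H ≤ K`). -/
def BiInvariantOn {G : Type*} [Group G] (K H : Subgroup G) (f : G → ℂ) : Prop :=
  ∀ h₁ ∈ H, ∀ g ∈ K, ∀ h₂ ∈ H, f (h₁ * g * h₂) = f g

/-- `ω` is a zonal spherical function of the Gelfand pair `(K, H)`: it is a nonzero
bi-`H`-invariant function on `K` satisfying the functional equation
`(1/|H|) Σ_{h ∈ H} ω(g h k) = ω(g) ω(k)` for `g, k ∈ K`. -/
def IsZonalSpherical {G : Type*} [Group G] [Fintype G] (K H : Subgroup G)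
    (ω : G → ℂ) : Prop :=
  (∃ g ∈ K, ω g ≠ 0) ∧ BiInvariantOn K H ω ∧
    ∀ g ∈ K, ∀ k ∈ K, (1 / (Nat.card H : ℂ)) * ∑ h : H, ω (g * (h : G) * k) = ω g * ω k


set_option linter.unusedSectionVars false

section Aux

section Basic
variable {G : Type*} [Group G] [Fintype G] (H K : Subgroup G)

lemma cardH_ne_zero : (Nat.card H : ℂ) ≠ 0 := by
  simp [Nat.card_eq_fintype_card, Fintype.card_ne_zero]

lemma sum_H_const (c : ℂ) : ∑ _h : H, c = (Nat.card H : ℂ) * c := by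
  simp [Finset.sum_const, Nat.card_eq_fintype_card, nsmul_eq_mul]

variable {H K}

lemma BiInvariantOn.left_inv {f : G → ℂ} (hf : BiInvariantOn K H f) {h g : G}
    (hh : h ∈ H) (hg : g ∈ K) : f (h * g) = f g := by
  simpa using hf h hh g hg 1 H.one_mem

lemma BiInvariantOn.right_inv {f : G → ℂ} (hf : BiInvariantOn K H f) {h g : G}
    (hh : h ∈ H) (hg : g ∈ K) : f (g * h) = f g := by
  simpa using hf 1 H.one_mem g hg h hh

lemma spherical_one {ω : G → ℂ} (hω : IsZonalSpherical K H ω) : ω 1 = 1 := by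
  obtain ⟨⟨g₀, hg₀K, hg₀⟩, hbi, heq⟩ := hω
  have h1 := heq g₀ hg₀K 1 K.one_mem
  have h2 : ∀ h : H, ω (g₀ * (h : G) * 1) = ω g₀ := by
    intro h
    rw [mul_one]
    exact hbi.right_inv h.2 hg₀K
  rw [Finset.sum_congr rfl fun h _ => h2 h, sum_H_const] at h1
  have hκ : (Nat.card H : ℂ) ≠ 0 := cardH_ne_zero H
  field_simp at h1
  exact h1.symm

lemma restriction_spherical {ω : G → ℂ} (hω : IsZonalSpherical ⊤ H ω) :
    IsZonalSpherical K H ω := by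
  obtain ⟨hne, hbi, heq⟩ := hω
  refine ⟨⟨1, K.one_mem, ?_⟩, ?_, ?_⟩
  · rw [spherical_one (K := (⊤ : Subgroup G)) ⟨hne, hbi, heq⟩]; exact one_ne_zero
  · intro h₁ hh₁ g _ h₂ hh₂
    exact hbi h₁ hh₁ g (Subgroup.mem_top g) h₂ hh₂
  · intro g _ k _
    exact heq g (Subgroup.mem_top g) k (Subgroup.mem_top k)

end Basic
section ConvK
variable {G : Type*} [Group G] [Fintype G] {H K : Subgroup G}

lemma convOn_congr_right {f r r' : G → ℂ} (hr : ∀ y ∈ K, r y = r' y) {x : G} (hx : x ∈ K) :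
    convOn K f r x = convOn K f r' x := by
  refine Finset.sum_congr rfl fun t _ => ?_
  rw [hr _ (K.mul_mem (K.inv_mem t.2) hx)]

lemma convOn_smul_right (f u : G → ℂ) (a : ℂ) (x : G) :
    convOn K f (fun y => a * u y) x = a * convOn K f u x := by
  rw [convOn, convOn, Finset.mul_sum]
  exact Finset.sum_congr rfl fun t _ => by ring

lemma convOn_sum_right {ι : Type*} (f : G → ℂ) (s : Finset ι) (co : ι → ℂ) (Fn : ι → G → ℂ)
    (x : G) :
    convOn K f (fun y => ∑ w ∈ s, co w * Fn w y) x = ∑ w ∈ s, co w * convOn K f (Fn w) x := by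
  simp only [convOn, Finset.mul_sum]
  rw [Finset.sum_comm]
  exact Finset.sum_congr rfl fun w _ => Finset.sum_congr rfl fun t _ => by ring

/-- sum over `K` is invariant under left translation by an element of `K`. -/
lemma sum_K_mulLeft (a : K) (F : G → ℂ) :
    ∑ t : K, F t = ∑ t : K, F ((a : G) * t) := by
  refine (Fintype.sum_equiv (Equiv.mulLeft a) _ _ fun t => ?_).symm
  simp

lemma sum_H_inv (F : G → ℂ) : ∑ h : H, F h = ∑ h : H, F ((h : G)⁻¹) := by
  refine (Fintype.sum_equiv (Equiv.inv H) _ _ fun h => ?_).symm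
  simp

/-- Eigenfunction property: convolving a left-`H`-invariant function against a zonal
spherical function of `(K,H)` just rescales it (on `K`). -/
lemma conv_spherical_eq (hHK : H ≤ K) {ω : G → ℂ} (f : G → ℂ)
    (hω : IsZonalSpherical K H ω) (hf : ∀ h ∈ H, ∀ g : G, f (h * g) = f g) :
    ∀ x ∈ K, convOn K f ω x = (∑ t : K, f t * ω ((t : G)⁻¹)) * ω x := by
  obtain ⟨-, hbi, heq⟩ := hω
  intro x hx
  have hκ : (Nat.card H : ℂ) ≠ 0 := cardH_ne_zero H
  apply mul_left_cancel₀ hκ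
  have step1 : ∀ h : H, convOn K f ω x = ∑ t : K, f t * ω ((t : G)⁻¹ * (h : G)⁻¹ * x) := by
    intro h
    rw [convOn, sum_K_mulLeft (⟨(h : G), hHK h.2⟩ : K) (fun t => f t * ω (t⁻¹ * x))]
    refine Finset.sum_congr rfl fun t _ => ?_
    rw [hf h h.2 t, mul_inv_rev]
  calc (Nat.card H : ℂ) * convOn K f ω x
      = ∑ h : H, convOn K f ω x := (sum_H_const H _).symm
    _ = ∑ h : H, ∑ t : K, f t * ω ((t : G)⁻¹ * (h : G)⁻¹ * x) :=
        Finset.sum_congr rfl fun h _ => step1 h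
    _ = ∑ t : K, f t * ∑ h : H, ω ((t : G)⁻¹ * (h : G) * x) := by
        rw [Finset.sum_comm]
        refine Finset.sum_congr rfl fun t _ => ?_
        rw [Finset.mul_sum]
        rw [sum_H_inv (fun y => f t * ω ((t : G)⁻¹ * y * x))]
    _ = ∑ t : K, f t * ((Nat.card H : ℂ) * (ω ((t : G)⁻¹) * ω x)) := by
        refine Finset.sum_congr rfl fun t _ => ?_
        congr 1
        have h5 := heq ((t : G)⁻¹) (K.inv_mem t.2) x hx
        have h6 : (∑ h : H, ω ((t : G)⁻¹ * (h : G) * x))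
            = (Nat.card H : ℂ) * (ω ((t : G)⁻¹) * ω x) := by
          rw [← h5]
          field_simp
        exact h6
    _ = (Nat.card H : ℂ) * ((∑ t : K, f t * ω ((t : G)⁻¹)) * ω x) := by
        rw [Finset.sum_mul, Finset.mul_sum]
        exact Finset.sum_congr rfl fun t _ => by ring

end ConvK
section DC
variable {G : Type*} [Group G] [Fintype G]

/-- Indicator function of the double coset `H x₀ H`. -/
noncomputable def dcInd (H : Subgroup G) (x₀ : G) : G → ℂ :=
  fun g => if ∃ h₁ ∈ H, ∃ h₂ ∈ H, g = h₁ * x₀ * h₂ then 1 else 0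

variable {H K : Subgroup G}

lemma dcInd_left (H : Subgroup G) (x₀ : G) : ∀ h ∈ H, ∀ g : G, dcInd H x₀ (h * g) = dcInd H x₀ g := by
  intro h hh g
  unfold dcInd
  refine if_congr ?_ rfl rfl
  constructor
  · rintro ⟨a, ha, b, hb, hab⟩
    refine ⟨h⁻¹ * a, H.mul_mem (H.inv_mem hh) ha, b, hb, ?_⟩
    have hg : g = h⁻¹ * (h * g) := by group
    rw [hg, hab]; group
  · rintro ⟨a, ha, b, hb, hab⟩
    refine ⟨h * a, H.mul_mem hh ha, b, hb, ?_⟩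
    rw [hab]; group

lemma chi_dcInd {ω : G → ℂ} (hbi : BiInvariantOn K H ω) {x₀ : G} (hx₀ : x₀ ∈ K) :
    ∑ t : K, dcInd H x₀ t * ω ((t : G)⁻¹)
      = ((Finset.univ.filter
          (fun t : K => ∃ h₁ ∈ H, ∃ h₂ ∈ H, (t : G) = h₁ * x₀ * h₂)).card : ℂ) * ω x₀⁻¹ := by
  have step : ∀ t : K, dcInd H x₀ t * ω ((t : G)⁻¹)
      = if ∃ h₁ ∈ H, ∃ h₂ ∈ H, (t : G) = h₁ * x₀ * h₂ then ω x₀⁻¹ else 0 := by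
    intro t
    unfold dcInd
    split_ifs with hP
    · obtain ⟨a, ha, b, hb, hab⟩ := hP
      rw [one_mul, hab]
      have : (a * x₀ * b)⁻¹ = b⁻¹ * x₀⁻¹ * a⁻¹ := by group
      rw [this]
      exact hbi b⁻¹ (H.inv_mem hb) x₀⁻¹ (K.inv_mem hx₀) a⁻¹ (H.inv_mem ha)
    · rw [zero_mul]
  rw [Finset.sum_congr rfl fun t _ => step t, ← Finset.sum_filter, Finset.sum_const,
    nsmul_eq_mul]

lemma dc_card_ne_zero {x₀ : G} (hx₀ : x₀ ∈ K) :
    ((Finset.univ.filter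
        (fun t : K => ∃ h₁ ∈ H, ∃ h₂ ∈ H, (t : G) = h₁ * x₀ * h₂)).card : ℂ) ≠ 0 := by
  have hmem : (⟨x₀, hx₀⟩ : K) ∈ Finset.univ.filter
      (fun t : K => ∃ h₁ ∈ H, ∃ h₂ ∈ H, (t : G) = h₁ * x₀ * h₂) := by
    rw [Finset.mem_filter]
    exact ⟨Finset.mem_univ _, 1, H.one_mem, 1, H.one_mem, by group⟩
  have : (Finset.univ.filter
      (fun t : K => ∃ h₁ ∈ H, ∃ h₂ ∈ H, (t : G) = h₁ * x₀ * h₂)).card ≠ 0 :=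
    Finset.card_ne_zero_of_mem hmem
  exact_mod_cast Nat.cast_ne_zero.mpr this

lemma separation {ω Ω : G → ℂ} (hbω : BiInvariantOn K H ω) (hbΩ : BiInvariantOn K H Ω)
    {x : G} (hx : x ∈ K) (hne : ω x ≠ Ω x) :
    ∑ t : K, dcInd H x⁻¹ t * ω ((t : G)⁻¹) ≠ ∑ t : K, dcInd H x⁻¹ t * Ω ((t : G)⁻¹) := by
  rw [chi_dcInd hbω (K.inv_mem hx), chi_dcInd hbΩ (K.inv_mem hx), inv_inv]
  intro hEq
  exact hne (mul_left_cancel₀ (dc_card_ne_zero (K.inv_mem hx)) hEq)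

end DC
section Fold
variable {G : Type*} [Group G] [Fintype G] {H K : Subgroup G}

/-- "Convolve with `F w` and subtract the `w`-eigenvalue" operator. -/
noncomputable def Dop (K : Subgroup G) (F : (G → ℂ) → (G → ℂ)) (w u : G → ℂ) : G → ℂ :=
  fun x => convOn K (F w) u x - (∑ t : K, F w t * w ((t : G)⁻¹)) * u x

lemma fold_congr (F : (G → ℂ) → (G → ℂ)) (L : List (G → ℂ)) {u u' : G → ℂ}
    (h : ∀ y ∈ K, u y = u' y) :
    ∀ x ∈ K, (L.foldr (Dop K F) u) x = (L.foldr (Dop K F) u') x := by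
  induction L with
  | nil => exact h
  | cons w L ih =>
    intro x hx
    simp only [List.foldr_cons, Dop]
    rw [convOn_congr_right ih hx, ih x hx]

lemma fold_eigen (hHK : H ≤ K) (F : (G → ℂ) → (G → ℂ))
    (hF : ∀ w, ∀ h ∈ H, ∀ g : G, F w (h * g) = F w g)
    (L : List (G → ℂ)) (hL : ∀ w ∈ L, IsZonalSpherical K H w)
    {u : G → ℂ} (hu : IsZonalSpherical K H u) :
    ∀ x ∈ K, (L.foldr (Dop K F) u) x
      = (L.map (fun w => (∑ t : K, F w t * u ((t : G)⁻¹)) - ∑ t : K, F w t * w ((t : G)⁻¹))).prod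
          * u x := by
  induction L with
  | nil =>
    intro x hx
    simp only [List.foldr_nil, List.map_nil, List.prod_nil, one_mul]
  | cons w L ih =>
    intro x hx
    have hL' : ∀ w' ∈ L, IsZonalSpherical K H w' := fun w' hw' => hL w' (List.mem_cons_of_mem _ hw')
    set P : ℂ := (L.map (fun w => (∑ t : K, F w t * u ((t : G)⁻¹))
        - ∑ t : K, F w t * w ((t : G)⁻¹))).prod with hP
    simp only [List.foldr_cons, Dop]
    rw [convOn_congr_right (ih hL') hx, convOn_smul_right, ih hL' x hx,
      conv_spherical_eq hHK (F w) hu (hF w) x hx]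
    simp only [List.map_cons, List.prod_cons]
    ring

lemma fold_sum (F : (G → ℂ) → (G → ℂ)) (L : List (G → ℂ))
    (s : Finset (G → ℂ)) (co : (G → ℂ) → ℂ) :
    ∀ x ∈ K, (L.foldr (Dop K F) (fun y => ∑ w ∈ s, co w * w y)) x
      = ∑ w ∈ s, co w * (L.foldr (Dop K F) w) x := by
  induction L with
  | nil => intro x hx; rfl
  | cons a L ih =>
    intro x hx
    simp only [List.foldr_cons, Dop]
    rw [convOn_congr_right ih hx, convOn_sum_right]
    have : (L.foldr (Dop K F) (fun y => ∑ w ∈ s, co w * w y)) x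
        = ∑ w ∈ s, co w * (L.foldr (Dop K F) w) x := ih x hx
    rw [this, Finset.mul_sum, ← Finset.sum_sub_distrib]
    refine Finset.sum_congr rfl fun w _ => by ring

end Fold
section ConvG
variable {G : Type*} [Group G] [Fintype G]

/-- Convolution over the full group. -/
noncomputable def convG (f u : G → ℂ) (x : G) : ℂ := ∑ t : G, f t * u (t⁻¹ * x)

lemma sum_top_subgroup (F : G → ℂ) : ∑ t : (⊤ : Subgroup G), F t = ∑ t : G, F t :=
  Fintype.sum_equiv Subgroup.topEquiv.toEquiv _ _ fun t => rfl

lemma convOn_top (f u : G → ℂ) : convOn ⊤ f u = convG f u := by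
  funext x
  exact sum_top_subgroup (fun t => f t * u (t⁻¹ * x))

lemma sum_G_mulLeft (a : G) (F : G → ℂ) : ∑ t : G, F t = ∑ t : G, F (a * t) :=
  (Fintype.sum_equiv (Equiv.mulLeft a) _ _ fun t => rfl).symm

lemma sum_G_inv (F : G → ℂ) : ∑ t : G, F t = ∑ t : G, F t⁻¹ :=
  (Fintype.sum_equiv (Equiv.inv G) _ _ fun t => rfl).symm

lemma convG_assoc (f₁ f₂ u : G → ℂ) : convG f₁ (convG f₂ u) = convG (convG f₁ f₂) u := by
  funext x
  unfold convG
  simp only [Finset.mul_sum, Finset.sum_mul]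
  conv_rhs => rw [Finset.sum_comm]
  refine Finset.sum_congr rfl fun t _ => ?_
  conv_rhs => rw [sum_G_mulLeft t (fun r => f₁ t * f₂ (t⁻¹ * r) * u (r⁻¹ * x))]
  refine Finset.sum_congr rfl fun s _ => ?_
  rw [inv_mul_cancel_left, mul_inv_rev, mul_assoc s⁻¹ t⁻¹ x]
  ring

variable (H : Subgroup G)

/-- Sum of point masses over the double coset `H g H`, with multiplicity. -/
noncomputable def fdel (H : Subgroup G) (g : G) : G → ℂ :=
  fun x => ∑ h₁ : H, ∑ h₂ : H, if x = (h₁ : G) * g * h₂ then 1 else 0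

lemma fdel_biinv (g : G) : BiInvariantOn ⊤ H (fdel H g) := by
  intro a ha x _ b hb
  unfold fdel
  refine Fintype.sum_equiv (Equiv.mulLeft ((⟨a, ha⟩ : H))⁻¹) _ _ fun h₁ => ?_
  refine Fintype.sum_equiv (Equiv.mulRight ((⟨b, hb⟩ : H))⁻¹) _ _ fun h₂ => ?_
  simp only [Equiv.coe_mulLeft, Equiv.coe_mulRight]
  push_cast
  refine if_congr ?_ rfl rfl
  constructor
  · intro hEq
    have hx : x = a⁻¹ * (a * x * b) * b⁻¹ := by group
    rw [hx, hEq]; group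
  · intro hEq
    rw [hEq]; group

lemma fdel_conj (g : G) (x : G) :
    (starRingEnd ℂ) (fdel H g x) = fdel H g x := by
  unfold fdel
  rw [map_sum]
  refine Finset.sum_congr rfl fun h₁ _ => ?_
  rw [map_sum]
  refine Finset.sum_congr rfl fun h₂ _ => ?_
  split_ifs <;> simp

lemma fdel_inv (g : G) (x : G) : fdel H g x⁻¹ = fdel H g⁻¹ x := by
  unfold fdel
  rw [Finset.sum_comm]
  refine Fintype.sum_equiv (Equiv.inv H) _ _ fun h₁ => ?_
  refine Fintype.sum_equiv (Equiv.inv H) _ _ fun h₂ => ?_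
  simp only [Equiv.inv_apply, Subgroup.coe_inv]
  refine if_congr ?_ rfl rfl
  constructor
  · intro hEq
    have : x = (x⁻¹)⁻¹ := by group
    rw [this, hEq]; group
  · intro hEq
    rw [hEq]; group

/-- The fundamental convolution identity for `fdel`. -/
lemma conv_fdel {ω : G → ℂ} (hbi : BiInvariantOn ⊤ H ω) (g k : G) :
    convG (fdel H g) ω k = (Nat.card H : ℂ) * ∑ h : H, ω (g⁻¹ * (h : G) * k) := by
  unfold convG fdel
  simp only [Finset.sum_mul]
  rw [Finset.sum_comm]
  have step1 : ∀ h₁ : H, (∑ t : G, ∑ h₂ : H, (if t = (h₁ : G) * g * h₂ then 1 else 0) * ω (t⁻¹ * k))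
      = ∑ h₂ : H, ω (((h₁ : G) * g * h₂)⁻¹ * k) := by
    intro h₁
    rw [Finset.sum_comm]
    refine Finset.sum_congr rfl fun h₂ _ => ?_
    simp only [ite_mul, one_mul, zero_mul]
    rw [Finset.sum_ite_eq' Finset.univ ((h₁ : G) * g * h₂) (fun t => ω (t⁻¹ * k))]
    simp
  rw [Finset.sum_congr rfl fun h₁ _ => step1 h₁]
  have step2 : ∀ h₁ : H, (∑ h₂ : H, ω (((h₁ : G) * g * h₂)⁻¹ * k))
      = (Nat.card H : ℂ) * ω (g⁻¹ * (h₁ : G)⁻¹ * k) := by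
    intro h₁
    have : ∀ h₂ : H, ω (((h₁ : G) * g * h₂)⁻¹ * k) = ω (g⁻¹ * (h₁ : G)⁻¹ * k) := by
      intro h₂
      have hrw : ((h₁ : G) * g * h₂)⁻¹ * k = (h₂ : G)⁻¹ * (g⁻¹ * (h₁ : G)⁻¹ * k) := by group
      rw [hrw]
      exact hbi.left_inv (H.inv_mem h₂.2) (Subgroup.mem_top _)
    rw [Finset.sum_congr rfl fun h₂ _ => this h₂, sum_H_const]
  rw [Finset.sum_congr rfl fun h₁ _ => step2 h₁, ← Finset.mul_sum]
  congr 1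
  rw [sum_H_inv (fun y => ω (g⁻¹ * y * k))]

/-- Adjoint identity for convolution against the bilinear-with-conjugation pairing. -/
lemma conv_adjoint (f w u : G → ℂ) :
    ∑ x : G, (starRingEnd ℂ) (w x) * convG f u x
      = ∑ y : G, (starRingEnd ℂ) (convG (fun t => (starRingEnd ℂ) (f t⁻¹)) w y) * u y := by
  unfold convG
  simp only [Finset.mul_sum]
  rw [Finset.sum_comm]
  have lhs1 : ∀ t : G, (∑ x : G, (starRingEnd ℂ) (w x) * (f t * u (t⁻¹ * x)))
      = ∑ y : G, (starRingEnd ℂ) (w (t * y)) * (f t * u y) := by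
    intro t
    rw [sum_G_mulLeft t (fun x => (starRingEnd ℂ) (w x) * (f t * u (t⁻¹ * x)))]
    refine Finset.sum_congr rfl fun y _ => ?_
    rw [inv_mul_cancel_left]
  rw [Finset.sum_congr rfl fun t _ => lhs1 t, Finset.sum_comm]
  refine Finset.sum_congr rfl fun y _ => ?_
  rw [map_sum, Finset.sum_mul]
  rw [sum_G_inv (fun t => (starRingEnd ℂ) (w (t * y)) * (f t * u y))]
  refine Finset.sum_congr rfl fun t _ => ?_
  rw [map_mul, Complex.conj_conj]
  ring

end ConvG
section Eigen
variable {G : Type*} [Group G] [Fintype G] {H : Subgroup G}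

/-- A nonzero bi-invariant common eigenfunction of all the convolution operators is a
scalar multiple of a zonal spherical function. -/
lemma eigen_spherical {ω : G → ℂ} (hbi : BiInvariantOn ⊤ H ω) (hne : ω ≠ 0)
    (heig : ∀ g : G, ∃ c : ℂ, ∀ k : G, convG (fdel H g) ω k = c * ω k) :
    ω 1 ≠ 0 ∧ IsZonalSpherical ⊤ H (fun x => (ω 1)⁻¹ * ω x) := by
  have hκ : (Nat.card H : ℂ) ≠ 0 := cardH_ne_zero H
  choose c hc using heig
  have hkey : ∀ g : G, (Nat.card H : ℂ) * ((Nat.card H : ℂ) * ω g⁻¹) = c g * ω 1 := by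
    intro g
    have h1 := hc g 1
    rw [conv_fdel H hbi g 1] at h1
    have h2 : ∀ h : H, ω (g⁻¹ * (h : G) * 1) = ω g⁻¹ := by
      intro h
      rw [mul_one]
      exact hbi.right_inv h.2 (Subgroup.mem_top _)
    rwa [Finset.sum_congr rfl fun h _ => h2 h, sum_H_const] at h1
  have hω1 : ω 1 ≠ 0 := by
    intro h0
    apply hne
    funext x
    have h3 := hkey x⁻¹
    rw [h0, mul_zero, inv_inv] at h3
    have h4 : (Nat.card H : ℂ) * ω x = 0 :=
      mul_left_cancel₀ hκ (h3.trans (mul_zero ((Nat.card H : ℂ))).symm)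
    have h5 : ω x = 0 :=
      mul_left_cancel₀ hκ (h4.trans (mul_zero ((Nat.card H : ℂ))).symm)
    simpa using h5
  refine ⟨hω1, ⟨1, Subgroup.mem_top _, ?_⟩, ?_, ?_⟩
  · show (ω 1)⁻¹ * ω 1 ≠ 0
    rw [inv_mul_cancel₀ hω1]; exact one_ne_zero
  · intro h₁ hh₁ g hg h₂ hh₂
    show (ω 1)⁻¹ * ω (h₁ * g * h₂) = (ω 1)⁻¹ * ω g
    rw [hbi h₁ hh₁ g hg h₂ hh₂]
  · intro g _ k _
    show (1 / (Nat.card H : ℂ)) * ∑ h : H, ((ω 1)⁻¹ * ω (g * (h : G) * k))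
        = ((ω 1)⁻¹ * ω g) * ((ω 1)⁻¹ * ω k)
    rw [← Finset.mul_sum]
    have h3 := hc g⁻¹ k
    rw [conv_fdel H hbi g⁻¹ k, inv_inv] at h3
    have h4 := hkey g⁻¹
    rw [inv_inv] at h4
    set S : ℂ := ∑ h : H, ω (g * (h : G) * k) with hSdef
    have h6 : (Nat.card H : ℂ) * (S * ω 1)
        = (Nat.card H : ℂ) * ((Nat.card H : ℂ) * (ω g * ω k)) := by
      linear_combination ω 1 * h3 - ω k * h4
    have hS1 : S * ω 1 = (Nat.card H : ℂ) * (ω g * ω k) := mul_left_cancel₀ hκ h6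
    rw [Nat.card_eq_fintype_card] at hS1
    field_simp
    rw [Nat.card_eq_fintype_card]
    linear_combination hS1

end Eigen
section CommonEig
variable {E : Type*} [AddCommGroup E] [Module ℂ E] [FiniteDimensional ℂ E]

/-- A finite commuting family of endomorphisms preserving a nonzero subspace has a
common eigenvector in it. -/
lemma common_eigenvector {ι : Type*} (s : Finset ι) (T : ι → Module.End ℂ E)
    (hcomm : ∀ i j, T i * T j = T j * T i) :
    ∀ U : Submodule ℂ E, U ≠ ⊥ → (∀ i ∈ s, ∀ u ∈ U, T i u ∈ U) →
      ∃ v, v ∈ U ∧ v ≠ 0 ∧ ∀ i ∈ s, ∃ c : ℂ, T i v = c • v := by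
  classical
  induction s using Finset.induction with
  | empty =>
    intro U hU _
    obtain ⟨v, hv, hv0⟩ := Submodule.exists_mem_ne_zero_of_ne_bot hU
    exact ⟨v, hv, hv0, fun i hi => absurd hi (by simp)⟩
  | @insert a s ha ih =>
    intro U hU hinv
    have hUa : ∀ u ∈ U, T a u ∈ U := fun u hu => hinv a (Finset.mem_insert_self a s) u hu
    have : Nontrivial U := Submodule.nontrivial_iff_ne_bot.mpr hU
    obtain ⟨μ, hμ⟩ := Module.End.exists_eigenvalue ((T a).restrict hUa)
    obtain ⟨v, hv⟩ := hμ.exists_hasEigenvector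
    set U' : Submodule ℂ E := U ⊓ Module.End.eigenspace (T a) μ with hU'def
    have hvU' : (v : E) ∈ U' := by
      refine Submodule.mem_inf.mpr ⟨v.2, ?_⟩
      rw [Module.End.mem_eigenspace_iff]
      have := hv.apply_eq_smul
      calc T a (v : E) = (((T a).restrict hUa) v : E) := (LinearMap.restrict_coe_apply _ _ _).symm
        _ = μ • (v : E) := by rw [this]; rfl
    have hU' : U' ≠ ⊥ := by
      intro hbot
      have : (v : E) = 0 := by rw [← Submodule.mem_bot (R := ℂ), ← hbot]; exact hvU'
      exact hv.2 (by exact_mod_cast this)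
    have hinv' : ∀ i ∈ s, ∀ u ∈ U', T i u ∈ U' := by
      intro i hi u hu
      rw [hU'def, Submodule.mem_inf] at hu ⊢
      refine ⟨hinv i (Finset.mem_insert_of_mem hi) u hu.1, ?_⟩
      rw [Module.End.mem_eigenspace_iff] at hu ⊢
      have hcm := congrArg (fun (f : Module.End ℂ E) => f u) (hcomm a i)
      simp only [Module.End.mul_apply] at hcm
      rw [hcm, hu.2, map_smul]
    obtain ⟨w, hwU', hw0, hw⟩ := ih U' hU' hinv'
    refine ⟨w, (Submodule.mem_inf.mp hwU').1, hw0, ?_⟩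
    intro i hi
    rcases Finset.mem_insert.mp hi with rfl | his
    · exact ⟨μ, Module.End.mem_eigenspace_iff.mp (Submodule.mem_inf.mp hwU').2⟩
    · exact hw i his

end CommonEig
section Span
variable {G : Type*} [Group G] [Fintype G] (H : Subgroup G)

lemma spherical_conj {ω : G → ℂ} (hω : IsZonalSpherical ⊤ H ω) :
    IsZonalSpherical ⊤ H (fun x => (starRingEnd ℂ) (ω x)) := by
  obtain ⟨⟨g₀, hg₀, hne⟩, hbi, heq⟩ := hω
  refine ⟨⟨g₀, hg₀, by simpa using hne⟩, ?_, ?_⟩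
  · intro h₁ hh₁ g hg h₂ hh₂
    show (starRingEnd ℂ) (ω (h₁ * g * h₂)) = (starRingEnd ℂ) (ω g)
    rw [hbi h₁ hh₁ g hg h₂ hh₂]
  · intro g hg k hk
    have h := congrArg (starRingEnd ℂ) (heq g hg k hk)
    rw [map_mul, map_mul, map_sum] at h
    have h1 : (starRingEnd ℂ) (1 / (Nat.card H : ℂ)) = 1 / (Nat.card H : ℂ) := by
      simp
    rw [h1] at h
    exact h

lemma convG_biinv {f u : G → ℂ} (hf : BiInvariantOn ⊤ H f) (hu : BiInvariantOn ⊤ H u) :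
    BiInvariantOn ⊤ H (convG f u) := by
  intro a ha y _ b hb
  show convG f u (a * y * b) = convG f u y
  unfold convG
  rw [sum_G_mulLeft a (fun t => f t * u (t⁻¹ * (a * y * b)))]
  refine Finset.sum_congr rfl fun t _ => ?_
  rw [hf.left_inv ha (Subgroup.mem_top t)]
  congr 1
  have h1 : (a * t)⁻¹ * (a * y * b) = (t⁻¹ * y) * b := by group
  rw [h1, hu.right_inv hb (Subgroup.mem_top _)]

/-- Convolution with `fdel H g` as a linear endomorphism. -/
noncomputable def convEnd (g : G) : Module.End ℂ (G → ℂ) where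
  toFun u := convG (fdel H g) u
  map_add' u v := by
    funext x
    show convG (fdel H g) (u + v) x = convG (fdel H g) u x + convG (fdel H g) v x
    unfold convG
    rw [← Finset.sum_add_distrib]
    refine Finset.sum_congr rfl fun t _ => ?_
    simp only [Pi.add_apply]
    ring
  map_smul' c u := by
    funext x
    show convG (fdel H g) (c • u) x = c * convG (fdel H g) u x
    unfold convG
    rw [Finset.mul_sum]
    refine Finset.sum_congr rfl fun t _ => ?_
    simp only [Pi.smul_apply, smul_eq_mul]
    ring

lemma convEnd_comm
    (hG : ∀ f₁ f₂ : G → ℂ, BiInvariantOn ⊤ H f₁ → BiInvariantOn ⊤ H f₂ →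
      convOn ⊤ f₁ f₂ = convOn ⊤ f₂ f₁) (g g' : G) :
    convEnd H g * convEnd H g' = convEnd H g' * convEnd H g := by
  apply LinearMap.ext; intro u
  show convG (fdel H g) (convG (fdel H g') u) = convG (fdel H g') (convG (fdel H g) u)
  rw [convG_assoc, convG_assoc]
  have h := hG (fdel H g) (fdel H g') (fdel_biinv H g) (fdel_biinv H g')
  rw [convOn_top, convOn_top] at h
  rw [h]

lemma conv_fdel_spherical {w : G → ℂ} (hw : IsZonalSpherical ⊤ H w) (g' k : G) :
    convG (fdel H g') w k = ((Nat.card H : ℂ) * ((Nat.card H : ℂ) * w g'⁻¹)) * w k := by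
  have hκ : (Nat.card H : ℂ) ≠ 0 := cardH_ne_zero H
  obtain ⟨-, hbi, heq⟩ := hw
  rw [conv_fdel H hbi g' k]
  have h := heq g'⁻¹ (Subgroup.mem_top _) k (Subgroup.mem_top _)
  rw [one_div, inv_mul_eq_iff_eq_mul₀ hκ] at h
  rw [h]; ring

/-- The space of bi-`H`-invariant functions orthogonal to all zonal spherical functions. -/
noncomputable def U0 (H : Subgroup G) : Submodule ℂ (G → ℂ) where
  carrier := {u | BiInvariantOn ⊤ H u ∧ ∀ w : G → ℂ, IsZonalSpherical ⊤ H w →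
      ∑ x : G, (starRingEnd ℂ) (w x) * u x = 0}
  add_mem' := by
    rintro u v ⟨hu1, hu2⟩ ⟨hv1, hv2⟩
    refine ⟨?_, ?_⟩
    · intro h₁ hh₁ g hg h₂ hh₂
      simp only [Pi.add_apply, hu1 h₁ hh₁ g hg h₂ hh₂, hv1 h₁ hh₁ g hg h₂ hh₂]
    · intro w hw
      have : ∀ x : G, (starRingEnd ℂ) (w x) * (u + v) x
          = (starRingEnd ℂ) (w x) * u x + (starRingEnd ℂ) (w x) * v x := by
        intro x; simp only [Pi.add_apply]; ring
      rw [Finset.sum_congr rfl fun x _ => this x, Finset.sum_add_distrib, hu2 w hw, hv2 w hw,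
        add_zero]
  zero_mem' := by
    refine ⟨?_, ?_⟩
    · intro h₁ hh₁ g hg h₂ hh₂; simp
    · intro w hw; simp
  smul_mem' := by
    rintro c u ⟨hu1, hu2⟩
    refine ⟨?_, ?_⟩
    · intro h₁ hh₁ g hg h₂ hh₂
      simp only [Pi.smul_apply, smul_eq_mul, hu1 h₁ hh₁ g hg h₂ hh₂]
    · intro w hw
      have : ∀ x : G, (starRingEnd ℂ) (w x) * (c • u) x
          = c * ((starRingEnd ℂ) (w x) * u x) := by
        intro x; simp only [Pi.smul_apply, smul_eq_mul]; ring
      rw [Finset.sum_congr rfl fun x _ => this x, ← Finset.mul_sum, hu2 w hw, mul_zero]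

lemma U0_invariant (g : G) : ∀ u ∈ U0 H, (convEnd H g) u ∈ U0 H := by
  rintro u ⟨hbi, horth⟩
  refine ⟨convG_biinv H (fdel_biinv H g) hbi, ?_⟩
  intro w hw
  have hfd : (fun t : G => (starRingEnd ℂ) (fdel H g t⁻¹)) = fdel H g⁻¹ := by
    funext t; rw [fdel_inv, fdel_conj]
  have had := conv_adjoint (fdel H g) w u
  rw [hfd] at had
  show (∑ x : G, (starRingEnd ℂ) (w x) * convG (fdel H g) u x) = 0
  rw [had]
  have heigen : ∀ y : G, convG (fdel H g⁻¹) w y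
      = ((Nat.card H : ℂ) * ((Nat.card H : ℂ) * w g⁻¹⁻¹)) * w y :=
    fun y => conv_fdel_spherical H hw g⁻¹ y
  have step : ∀ y : G, (starRingEnd ℂ) (convG (fdel H g⁻¹) w y) * u y
      = (starRingEnd ℂ) ((Nat.card H : ℂ) * ((Nat.card H : ℂ) * w g⁻¹⁻¹))
          * ((starRingEnd ℂ) (w y) * u y) := by
    intro y
    rw [heigen y, map_mul]
    ring
  rw [Finset.sum_congr rfl fun y _ => step y, ← Finset.mul_sum, horth w hw, mul_zero]

/-- Bi-`H`-invariant functions as a submodule. -/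
noncomputable def biinvSubmodule (H : Subgroup G) : Submodule ℂ (G → ℂ) where
  carrier := {u | BiInvariantOn ⊤ H u}
  add_mem' := by
    intro u v hu hv h₁ hh₁ g hg h₂ hh₂
    simp only [Pi.add_apply, hu h₁ hh₁ g hg h₂ hh₂, hv h₁ hh₁ g hg h₂ hh₂]
  zero_mem' := by intro h₁ hh₁ g hg h₂ hh₂; simp
  smul_mem' := by
    intro c u hu h₁ hh₁ g hg h₂ hh₂
    simp only [Pi.smul_apply, smul_eq_mul, hu h₁ hh₁ g hg h₂ hh₂]

end Span
section SpanMain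
variable {G : Type*} [Group G] [Fintype G] (H : Subgroup G)

lemma spherical_span
    (hG : ∀ f₁ f₂ : G → ℂ, BiInvariantOn ⊤ H f₁ → BiInvariantOn ⊤ H f₂ →
      convOn ⊤ f₁ f₂ = convOn ⊤ f₂ f₁)
    {u : G → ℂ} (hu : BiInvariantOn ⊤ H u) :
    u ∈ Submodule.span ℂ {w : G → ℂ | IsZonalSpherical ⊤ H w} := by
  classical
  -- Step 1: no nonzero bi-invariant function is orthogonal to all spherical functions.
  have hU0 : U0 H = ⊥ := by
    by_contra hne
    obtain ⟨v, hvU, hv0, hev⟩ := common_eigenvector Finset.univ (fun g : G => convEnd H g)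
      (fun i j => convEnd_comm H hG i j) (U0 H) hne
      (fun i _ u hu => U0_invariant H i u hu)
    obtain ⟨hbi, horth⟩ := hvU
    have heig : ∀ g : G, ∃ c : ℂ, ∀ k : G, convG (fdel H g) v k = c * v k := by
      intro g
      obtain ⟨c, hc⟩ := hev g (Finset.mem_univ g)
      refine ⟨c, fun k => ?_⟩
      have : (convEnd H g) v = c • v := hc
      have h2 := congrFun this k
      simpa [convEnd] using h2
    obtain ⟨hv1, hsph⟩ := eigen_spherical hbi hv0 heig
    have h0 := horth _ hsph
    -- `h0 : ∑ x, conj ((v 1)⁻¹ * v x) * v x = 0`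
    have hc0 : (starRingEnd ℂ) ((v 1)⁻¹) ≠ 0 := by
      simpa using inv_ne_zero hv1
    have h2 : (starRingEnd ℂ) ((v 1)⁻¹) * ∑ x : G, (starRingEnd ℂ) (v x) * v x = 0 := by
      rw [Finset.mul_sum, ← h0]
      refine Finset.sum_congr rfl fun x _ => ?_
      rw [map_mul]
      ring
    have h3 : (∑ x : G, (starRingEnd ℂ) (v x) * v x) = 0 :=
      (mul_eq_zero.mp h2).resolve_left hc0
    have h4 : (∑ x : G, (Complex.normSq (v x) : ℂ)) = 0 := by
      rw [← h3]
      exact Finset.sum_congr rfl fun x _ => Complex.normSq_eq_conj_mul_self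
    have h5 : (∑ x : G, Complex.normSq (v x)) = 0 := by
      have := h4
      push_cast at this
      exact_mod_cast this
    have h6 : ∀ x ∈ Finset.univ, Complex.normSq (v x) = 0 := by
      rw [← Finset.sum_eq_zero_iff_of_nonneg (fun x _ => Complex.normSq_nonneg (v x))]
      exact h5
    apply hv0
    funext x
    have := Complex.normSq_eq_zero.mp (h6 x (Finset.mem_univ x))
    simpa using this
  -- Step 2: dimension count.
  set S : Set (G → ℂ) := {w : G → ℂ | IsZonalSpherical ⊤ H w} with hS
  set W : Submodule ℂ (G → ℂ) := Submodule.span ℂ S with hW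
  set V : Submodule ℂ (G → ℂ) := biinvSubmodule H with hV
  have hWV : W ≤ V := Submodule.span_le.mpr (fun w hw => hw.2.1)
  let Φ : V →ₗ[ℂ] Module.Dual ℂ W :=
    { toFun := fun uu =>
        { toFun := fun ww => ∑ x : G, (ww : G → ℂ) x * (uu : G → ℂ) x
          map_add' := fun w₁ w₂ => by
            simp only [Submodule.coe_add, Pi.add_apply]
            rw [← Finset.sum_add_distrib]
            exact Finset.sum_congr rfl fun x _ => by ring
          map_smul' := fun c w => by
            simp only [Submodule.coe_smul, Pi.smul_apply, smul_eq_mul, RingHom.id_apply]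
            rw [Finset.mul_sum]
            exact Finset.sum_congr rfl fun x _ => by ring }
      map_add' := fun u₁ u₂ => by
        apply LinearMap.ext
        intro ww
        simp only [LinearMap.coe_mk, AddHom.coe_mk, LinearMap.add_apply, Submodule.coe_add,
          Pi.add_apply]
        rw [← Finset.sum_add_distrib]
        exact Finset.sum_congr rfl fun x _ => by ring
      map_smul' := fun c uu => by
        apply LinearMap.ext
        intro ww
        simp only [LinearMap.coe_mk, AddHom.coe_mk, RingHom.id_apply, LinearMap.smul_apply,
          Submodule.coe_smul, Pi.smul_apply, smul_eq_mul]
        rw [Finset.mul_sum]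
        exact Finset.sum_congr rfl fun x _ => by ring }
  have hinj : Function.Injective Φ := by
    rw [injective_iff_map_eq_zero]
    intro uu h
    have hmem : (uu : G → ℂ) ∈ U0 H := by
      refine ⟨uu.2, ?_⟩
      intro w hw
      have hconjw : IsZonalSpherical ⊤ H (fun x => (starRingEnd ℂ) (w x)) :=
        spherical_conj H hw
      have hwW : (fun x => (starRingEnd ℂ) (w x)) ∈ W := Submodule.subset_span hconjw
      have h2 := congrArg (fun φ : Module.Dual ℂ W => φ (⟨_, hwW⟩ : W)) h
      simpa [Φ] using h2
    rw [hU0, Submodule.mem_bot] at hmem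
    exact Subtype.ext hmem
  have hfr : Module.finrank ℂ V ≤ Module.finrank ℂ W := by
    calc Module.finrank ℂ V ≤ Module.finrank ℂ (Module.Dual ℂ W) :=
          LinearMap.finrank_le_finrank_of_injective hinj
      _ = Module.finrank ℂ W := Subspace.dual_finrank_eq
  have hVW : W = V := Submodule.eq_of_le_of_finrank_le hWV hfr
  have huV : u ∈ V := hu
  rw [← hVW] at huV
  exact huV

end SpanMain

end Aux

/-- Let `(G,H)` be a finite Gelfand pair, `ω` a zonal spherical function
of `(G,H)`, and `K` a subgroup with `H ⊆ K ⊆ G` such that `(K,H)` is also a Gelfand pair.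
Then `ω|_K` is a zonal spherical function of `(K,H)`; moreover every zonal spherical
function of `(K,H)` is such a restriction. -/
theorem spherical_restriction {G : Type*} [Group G] [Fintype G] (H K : Subgroup G)
    (hHK : H ≤ K)
    (hG : ∀ f₁ f₂ : G → ℂ, BiInvariantOn ⊤ H f₁ → BiInvariantOn ⊤ H f₂ →
      convOn ⊤ f₁ f₂ = convOn ⊤ f₂ f₁)
    (hK : ∀ f₁ f₂ : G → ℂ, BiInvariantOn K H f₁ → BiInvariantOn K H f₂ →
      ∀ x ∈ K, convOn K f₁ f₂ x = convOn K f₂ f₁ x) :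
    (∀ ω : G → ℂ, IsZonalSpherical ⊤ H ω → IsZonalSpherical K H ω) ∧
      (∀ Ω : G → ℂ, IsZonalSpherical K H Ω →
        ∃ ω : G → ℂ, IsZonalSpherical ⊤ H ω ∧ ∀ x ∈ K, ω x = Ω x) := by

  classical
  refine ⟨fun ω hω => restriction_spherical hω, ?_⟩
  intro Ω hΩ
  by_contra hcon
  push_neg at hcon
  -- extension of Ω by zero is bi-invariant on G
  set Ωt : G → ℂ := fun x => if x ∈ K then Ω x else 0 with hΩt
  have hbiΩt : BiInvariantOn ⊤ H Ωt := by
    intro h₁ hh₁ g _ h₂ hh₂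
    by_cases hg : g ∈ K
    · have hmem : h₁ * g * h₂ ∈ K := K.mul_mem (K.mul_mem (hHK hh₁) hg) (hHK hh₂)
      simp only [hΩt, if_pos hmem, if_pos hg]
      exact hΩ.2.1 h₁ hh₁ g hg h₂ hh₂
    · have hmem : h₁ * g * h₂ ∉ K := by
        intro hc
        apply hg
        have hgeq : g = h₁⁻¹ * (h₁ * g * h₂) * h₂⁻¹ := by group
        rw [hgeq]
        exact K.mul_mem (K.mul_mem (K.inv_mem (hHK hh₁)) hc) (K.inv_mem (hHK hh₂))
      simp only [hΩt, if_neg hmem, if_neg hg]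
  -- decompose it along the spherical functions of (G,H)
  have hspan := spherical_span H hG hbiΩt
  rw [Submodule.mem_span_set] at hspan
  obtain ⟨c, hsupp, hsum⟩ := hspan
  -- each spherical function of (G,H) differs from Ω somewhere on K
  have hwit : ∀ w : G → ℂ, ∃ x : G, x ∈ K ∧ (w ∈ c.support → w x ≠ Ω x) := by
    intro w
    by_cases hw : w ∈ c.support
    · obtain ⟨x, hxK, hxne⟩ := hcon w (hsupp hw)
      exact ⟨x, hxK, fun _ => hxne⟩
    · exact ⟨1, K.one_mem, fun h => absurd h hw⟩
  choose xw hxwK hxw using hwit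
  set F : (G → ℂ) → (G → ℂ) := fun w => dcInd H (xw w)⁻¹ with hF
  have hFinv : ∀ w : G → ℂ, ∀ h ∈ H, ∀ g : G, F w (h * g) = F w g :=
    fun w h hh g => dcInd_left H (xw w)⁻¹ h hh g
  set L : List (G → ℂ) := c.support.toList with hL
  have hLmem : ∀ w ∈ L, w ∈ c.support := fun w hw => Finset.mem_toList.mp hw
  have hsphK : ∀ w ∈ c.support, IsZonalSpherical K H w :=
    fun w hw => restriction_spherical (hsupp hw)
  have hLsph : ∀ w ∈ L, IsZonalSpherical K H w := fun w hw => hsphK w (hLmem w hw)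
  -- the sum decomposition holds pointwise on K
  have hptwise : ∀ y ∈ K, (fun y => ∑ w ∈ c.support, c w * w y) y = Ω y := by
    intro y hy
    have h1 := congrFun hsum y
    rw [Finsupp.sum] at h1
    rw [Finset.sum_apply] at h1
    simp only [Pi.smul_apply, smul_eq_mul] at h1
    simp only []
    rw [h1, hΩt]
    simp [hy]
  -- apply the chain of annihilating operators
  have key : ∀ x ∈ K,
      (L.map (fun w => (∑ t : K, F w t * Ω ((t : G)⁻¹)) - ∑ t : K, F w t * w ((t : G)⁻¹))).prod
        * Ω x = 0 := by
    intro x hx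
    have e1 : (L.foldr (Dop K F) (fun y => ∑ w ∈ c.support, c w * w y)) x
        = ∑ w ∈ c.support, c w * (L.foldr (Dop K F) w) x :=
      fold_sum F L c.support (fun w => c w) x hx
    have e2 : (L.foldr (Dop K F) (fun y => ∑ w ∈ c.support, c w * w y)) x
        = (L.foldr (Dop K F) Ω) x :=
      fold_congr F L hptwise x hx
    have e3 : (L.foldr (Dop K F) Ω) x
        = (L.map (fun w => (∑ t : K, F w t * Ω ((t : G)⁻¹))
            - ∑ t : K, F w t * w ((t : G)⁻¹))).prod * Ω x :=
      fold_eigen hHK F hFinv L hLsph hΩ x hx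
    have e4 : ∀ w ∈ c.support, (L.foldr (Dop K F) w) x = 0 := by
      intro w hw
      have := fold_eigen hHK F hFinv L hLsph (hsphK w hw) x hx
      rw [this]
      have hzero : (0 : ℂ) ∈ L.map (fun w' => (∑ t : K, F w' t * w ((t : G)⁻¹))
          - ∑ t : K, F w' t * w' ((t : G)⁻¹)) :=
        List.mem_map.mpr ⟨w, Finset.mem_toList.mpr hw, sub_self _⟩
      rw [List.prod_eq_zero hzero, zero_mul]
    rw [← e3, ← e2, e1, Finset.sum_congr rfl fun w hw => by rw [e4 w hw, mul_zero]]
    simp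
  -- the leading coefficient is nonzero
  have hPne : (L.map (fun w => (∑ t : K, F w t * Ω ((t : G)⁻¹))
      - ∑ t : K, F w t * w ((t : G)⁻¹))).prod ≠ 0 := by
    apply List.prod_ne_zero
    intro h0
    obtain ⟨w, hwL, hfac⟩ := List.mem_map.mp h0
    have hwmem := hLmem w hwL
    have hsep := separation (hsphK w hwmem).2.1 hΩ.2.1 (hxwK w) (hxw w hwmem)
    apply hsep
    exact (sub_eq_zero.mp hfac).symm
  -- hence Ω vanishes on K, contradiction
  obtain ⟨g₀, hg₀K, hg₀⟩ := hΩ.1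
  exact hg₀ (by
    have := key g₀ hg₀K
    exact (mul_eq_zero.mp this).resolve_left hPne)
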